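/- Let f, g : ℝ → ℝ be n,q-differentiable at t ∈ ℝ (for t ∈ S this means f and g are differentiable at t). Then the product f·g is n,q-differentiable at t and D_{n,q}(f·g)(t) = D_{n,q} f(t)·g(t) + f(q·t^n)·D_{n,q} g(t) = f(t)·D_{n,q} g(t) + D_{n,q} f(t)·g(q·t^n). -/

import Mathlib

open Filter
open scoped Classical

noncomputable section

/-- `[k]_n = ∑_{i=0}^{k-1} n^i` (so `[0]_n = 0`). -/
def nbr (n k : ℕ) : ℕ := ∑ i ∈ Finset.range k, n ^ i

/-- `h(t) = q·t^n`. -/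
def hfun (q : ℝ) (n : ℕ) (t : ℝ) : ℝ := q * t ^ n

/-- `θ = q^(1/(1-n))` (meaningful for `n ≥ 3`). -/
def theta (q : ℝ) (n : ℕ) : ℝ := q ^ ((1 : ℝ) / (1 - (n : ℝ)))

/-- `S = {0}` if `n = 1`, and `S = {-θ, 0, θ}` if `n ≥ 3`. -/
def Sset (q : ℝ) (n : ℕ) : Set ℝ :=
  if n = 1 then {0} else {-theta q n, 0, theta q n}

/-- `I = (-θ, θ)` (all of `ℝ` when `n = 1`). -/
def Iset (q : ℝ) (n : ℕ) : Set ℝ :=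
  if n = 1 then Set.univ else Set.Ioo (-theta q n) (theta q n)

/-- The `n,q`-power difference operator `D_{n,q}`. -/
def Dnq (q : ℝ) (n : ℕ) (f : ℝ → ℝ) (t : ℝ) : ℝ :=
  if t ∈ Sset q n then deriv f t
  else (f (q * t ^ n) - f t) / (q * t ^ n - t)

/-- The `k`-th summand of the series defining the `n,q`-integral `∫_0^x f(t) d_{n,q}t`. -/
def nqSeq (q : ℝ) (n : ℕ) (f : ℝ → ℝ) (x : ℝ) (k : ℕ) : ℝ :=
  q ^ nbr n k * x ^ n ^ k * (q ^ n ^ k * x ^ (n ^ k * (n - 1)) - 1) *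
    f (q ^ nbr n k * x ^ n ^ k)

/-- `∫_0^x f(t) d_{n,q}t`. -/
def nqInt0 (q : ℝ) (n : ℕ) (f : ℝ → ℝ) (x : ℝ) : ℝ := -∑' k : ℕ, nqSeq q n f x k

/-- `∫_a^b f(t) d_{n,q}t = ∫_0^b f(t) d_{n,q}t − ∫_0^a f(t) d_{n,q}t`. -/
def nqInt (q : ℝ) (n : ℕ) (f : ℝ → ℝ) (a b : ℝ) : ℝ :=
  nqInt0 q n f b - nqInt0 q n f a

/-- The orbit `[s]_{n,q} = {q^{[k]_n}·s^{n^k} : k ∈ ℕ}`. -/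
def nqOrbit (q : ℝ) (n : ℕ) (s : ℝ) : Set ℝ :=
  Set.range fun k : ℕ => q ^ nbr n k * s ^ n ^ k

/-- The `n,q`-interval `[a,b]_{n,q}`. -/
def nqInterval (q : ℝ) (n : ℕ) (a b : ℝ) : Set ℝ :=
  nqOrbit q n a ∪ nqOrbit q n b ∪ {0}


lemma fixedS (q : ℝ) (hq0 : 0 < q) (n : ℕ) (hn : Odd n) (t : ℝ)
    (ht : t ∈ Sset q n) : q * t ^ n = t := by
  unfold Sset at ht
  split_ifs at ht with h1
  · simp only [Set.mem_singleton_iff] at ht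
    subst ht; simp [h1]
  · have hn0 : n ≠ 0 := hn.pos.ne'
    have hden : (1 : ℝ) - (n : ℝ) ≠ 0 := by
      intro h
      apply h1
      have : (n : ℝ) = 1 := by linarith
      exact_mod_cast this
    have key : q * (theta q n) ^ n = theta q n := by
      unfold theta
      rw [← Real.rpow_natCast (q ^ ((1:ℝ)/(1-(n:ℝ)))) n, ← Real.rpow_mul hq0.le]
      nth_rewrite 1 [← Real.rpow_one q]
      rw [← Real.rpow_add hq0]
      congr 1
      field_simp
      try ring
    simp only [Set.mem_insert_iff, Set.mem_singleton_iff] at ht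
    rcases ht with h | h | h
    · subst h
      rw [hn.neg_pow]
      rw [mul_neg, key]
    · subst h; simp [zero_pow hn0]
    · subst h; exact key

theorem stmt4 (q : ℝ) (hq0 : 0 < q) (hq1 : q < 1) (n : ℕ) (hn : Odd n)
    (f g : ℝ → ℝ) (t : ℝ)
    (hf : t ∈ Sset q n → DifferentiableAt ℝ f t)
    (hg : t ∈ Sset q n → DifferentiableAt ℝ g t) :
    (t ∈ Sset q n → DifferentiableAt ℝ (fun x => f x * g x) t) ∧
    Dnq q n (fun x => f x * g x) t =
      Dnq q n f t * g t + f (q * t ^ n) * Dnq q n g t ∧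
    Dnq q n (fun x => f x * g x) t =
      f t * Dnq q n g t + Dnq q n f t * g (q * t ^ n) := by
  by_cases hts : t ∈ Sset q n
  · have hfix := fixedS q hq0 n hn t hts
    have hdf := hf hts
    have hdg := hg hts
    refine ⟨fun _ => hdf.mul hdg, ?_, ?_⟩ <;>
    · simp only [Dnq, if_pos hts, hfix]
      rw [deriv_fun_mul hdf hdg]
      try ring
  · refine ⟨fun h => absurd h hts, ?_, ?_⟩ <;>
    · simp only [Dnq, if_neg hts]
      by_cases hd : q * t ^ n - t = 0
      · rw [hd]; simp
      · field_simp
        ring
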